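/- Ground-truth interaction values for unanimity games: let d ≥ 1, let m : ℕ → ℝ be any weight function, let Q, S ⊆ Fin d, and write q := |Q|, s := |S|, r := |S ∩ Q|. Then Σ_{T ⊆ Fin d, Q ⊆ T} (−1)^{s − |T ∩ S|} · m(|T| − |T ∩ S|) = Σ_{t=q}^{d} Σ_{k=0}^{min(t−q, s−r)} C(d − q − (s − r), t − q − k) · C(s − r, k) · (−1)^{s − (k + r)} · m(t − (k + r)); i.e. the full-powerset cardinal-interaction weight sum of the unanimity game ν_Q(T) = 𝟙(Q ⊆ T) admits the stated closed form ω(q, r). -/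
import Mathlib

open Finset

private lemma sum_powerset_card_eq {α : Type*} [DecidableEq α] (X : Finset α) (h : ℕ → ℝ) :
    ∑ A ∈ X.powerset, h A.card = ∑ k ∈ Finset.range (X.card + 1), (X.card.choose k : ℝ) * h k := by
  rw [Finset.sum_powerset]
  refine Finset.sum_congr rfl fun k _ => ?_
  have hc : ∀ A ∈ Finset.powersetCard k X, h A.card = h k := fun A hA => by
    rw [(Finset.mem_powersetCard.mp hA).2]
  rw [Finset.sum_congr rfl hc, Finset.sum_const, Finset.card_powersetCard, nsmul_eq_mul]

/-- Ground-truth cardinal interaction values for unanimity games (Proposition in the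
appendix of SHAP-IQ): the full-powerset weight sum of `ν_Q(T) = 𝟙(Q ⊆ T)` admits the
closed form `ω(q, r)`. -/
theorem unanimity_game_cii_closed_form
    (d : ℕ) (hd : 1 ≤ d) (m : ℕ → ℝ) (Q S : Finset (Fin d)) :
    ∑ T ∈ (Finset.univ : Finset (Fin d)).powerset.filter (fun T => Q ⊆ T),
      (-1 : ℝ) ^ (S.card - (T ∩ S).card) * m (T.card - (T ∩ S).card) =
    ∑ t ∈ Finset.Icc Q.card d,
      ∑ k ∈ Finset.range (min (t - Q.card) (S.card - (S ∩ Q).card) + 1),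
        (Nat.choose (d - Q.card - (S.card - (S ∩ Q).card)) (t - Q.card - k) : ℝ) *
          (Nat.choose (S.card - (S ∩ Q).card) k : ℝ) *
          (-1 : ℝ) ^ (S.card - (k + (S ∩ Q).card)) * m (t - (k + (S ∩ Q).card)) := by
  classical
  set q := Q.card with hq
  set s := S.card with hs
  set r := (S ∩ Q).card with hr
  have hrq : r ≤ q := Finset.card_le_card Finset.inter_subset_right
  have hrs : r ≤ s := Finset.card_le_card Finset.inter_subset_left
  have hqd : q ≤ d := by
    have := Finset.card_le_card (Finset.subset_univ Q)
    simpa using this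
  set B := S \ Q with hBdef
  set U := Qᶜ \ S with hUdef
  have hBcard : B.card = s - r := by
    have h1 : B.card + r = s := by
      rw [hBdef, hr, hs]; exact Finset.card_sdiff_add_card_inter S Q
    omega
  have hBU : B ⊆ Qᶜ := by
    intro x hx
    rw [hBdef, Finset.mem_sdiff] at hx
    simpa using hx.2
  have hsrdq : s - r ≤ d - q := by
    have h1 := Finset.card_le_card hBU
    rw [hBcard, Finset.card_compl] at h1
    simpa using h1
  have hUcard : U.card = d - q - (s - r) := by
    have h1 : Qᶜ ∩ S = B := by
      ext x; simp [hBdef, and_comm]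
    have h3 : (Qᶜ : Finset (Fin d)).card = d - q := by
      rw [Finset.card_compl, hq]; simp
    have h2 : U.card + (s - r) = d - q := by
      have := Finset.card_sdiff_add_card_inter (Qᶜ) S
      rw [h1, hBcard, h3] at this
      exact this
    omega
  set N := d - q - (s - r) with hN
  -- the canonical double sum
  set D : ℝ := ∑ k ∈ Finset.range (s - r + 1), ∑ j ∈ Finset.range (N + 1),
      (N.choose j : ℝ) * ((s - r).choose k : ℝ) * (-1 : ℝ) ^ (s - (k + r)) * m (j + (q - r))
    with hD
  have hLHS : ∑ T ∈ (Finset.univ : Finset (Fin d)).powerset.filter (fun T => Q ⊆ T),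
      (-1 : ℝ) ^ (s - (T ∩ S).card) * m (T.card - (T ∩ S).card) = D := by
    have step1 : ∑ T ∈ (Finset.univ : Finset (Fin d)).powerset.filter (fun T => Q ⊆ T),
        (-1 : ℝ) ^ (s - (T ∩ S).card) * m (T.card - (T ∩ S).card) =
        ∑ p ∈ B.powerset ×ˢ U.powerset,
          (-1 : ℝ) ^ (s - (p.1.card + r)) * m (q + p.1.card + p.2.card - (p.1.card + r)) := by
      refine Finset.sum_nbij' (fun T => (T ∩ B, T \ (Q ∪ S))) (fun p => Q ∪ p.1 ∪ p.2)
        ?_ ?_ ?_ ?_ ?_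
      · intro T hT
        simp only [Finset.mem_product, Finset.mem_powerset]
        refine ⟨Finset.inter_subset_right, ?_⟩
        intro x hx
        rw [Finset.mem_sdiff, Finset.mem_union] at hx
        rw [hUdef, Finset.mem_sdiff, Finset.mem_compl]
        tauto
      · intro p hp
        simp only [Finset.mem_filter, Finset.mem_powerset]
        exact ⟨Finset.subset_univ _, by intro x hx; simp [hx]⟩
      · intro T hT
        simp only [Finset.mem_filter, Finset.mem_powerset] at hT
        have hQT := hT.2
        ext x
        have hQT' : x ∈ Q → x ∈ T := fun h => hQT h
        simp only [Finset.mem_union, Finset.mem_inter, Finset.mem_sdiff, hBdef]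
        tauto
      · rintro ⟨b, c⟩ hp
        simp only [Finset.mem_product, Finset.mem_powerset] at hp
        obtain ⟨hb, hc⟩ := hp
        have hbS : ∀ x ∈ b, x ∈ S ∧ x ∉ Q := fun x hx => by
          have := hb hx; rw [hBdef, Finset.mem_sdiff] at this; exact this
        have hcU : ∀ x ∈ c, x ∉ Q ∧ x ∉ S := fun x hx => by
          have := hc hx; rw [hUdef, Finset.mem_sdiff, Finset.mem_compl] at this; exact this
        refine Prod.ext ?_ ?_
        · ext x
          have hb' := hbS x
          have hc' := hcU x
          simp only [Finset.mem_inter, Finset.mem_union, hBdef, Finset.mem_sdiff]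
          tauto
        · ext x
          have hb' := hbS x
          have hc' := hcU x
          simp only [Finset.mem_sdiff, Finset.mem_union]
          tauto
      · intro T hT
        simp only [Finset.mem_filter, Finset.mem_powerset] at hT
        have hQT := hT.2
        have hTS : T ∩ S = (T ∩ B) ∪ (S ∩ Q) := by
          ext x
          have hQT' : x ∈ Q → x ∈ T := fun h => hQT h
          simp only [Finset.mem_inter, Finset.mem_union, hBdef, Finset.mem_sdiff]
          tauto
        have hdisj1 : Disjoint (T ∩ B) (S ∩ Q) := by
          rw [Finset.disjoint_left]
          intro x hx hx'
          rw [Finset.mem_inter, hBdef, Finset.mem_sdiff] at hx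
          rw [Finset.mem_inter] at hx'
          exact hx.2.2 hx'.2
        have hcard1 : (T ∩ S).card = (T ∩ B).card + r := by
          rw [hTS, Finset.card_union_of_disjoint hdisj1]
        have hTsplit : T = Q ∪ (T ∩ B) ∪ (T \ (Q ∪ S)) := by
          ext x
          have hQT' : x ∈ Q → x ∈ T := fun h => hQT h
          simp only [Finset.mem_union, Finset.mem_inter, Finset.mem_sdiff, hBdef]
          tauto
        have hd1 : Disjoint Q (T ∩ B) := by
          rw [Finset.disjoint_left]
          intro x hx hx'
          rw [Finset.mem_inter, hBdef, Finset.mem_sdiff] at hx'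
          exact hx'.2.2 hx
        have hd2 : Disjoint (Q ∪ (T ∩ B)) (T \ (Q ∪ S)) := by
          rw [Finset.disjoint_left]
          intro x hx hx'
          rw [Finset.mem_sdiff, Finset.mem_union] at hx'
          rw [Finset.mem_union, Finset.mem_inter, hBdef, Finset.mem_sdiff] at hx
          rcases hx with h | h
          · exact hx'.2 (Or.inl h)
          · exact hx'.2 (Or.inr h.2.1)
        have hcard2 : T.card = q + (T ∩ B).card + (T \ (Q ∪ S)).card := by
          conv_lhs => rw [hTsplit]
          rw [Finset.card_union_of_disjoint hd2, Finset.card_union_of_disjoint hd1]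
        rw [hcard1, hcard2]
    rw [step1, Finset.sum_product]
    have step2 : ∀ b ∈ B.powerset,
        (∑ c ∈ U.powerset,
          (-1 : ℝ) ^ (s - (b.card + r)) * m (q + b.card + c.card - (b.card + r))) =
        ∑ j ∈ Finset.range (U.card + 1),
          (U.card.choose j : ℝ) *
            ((-1 : ℝ) ^ (s - (b.card + r)) * m (q + b.card + j - (b.card + r))) :=
      fun b _ => sum_powerset_card_eq U
        (fun c => (-1 : ℝ) ^ (s - (b.card + r)) * m (q + b.card + c - (b.card + r)))
    rw [Finset.sum_congr rfl step2]
    rw [sum_powerset_card_eq B (fun k => ∑ j ∈ Finset.range (U.card + 1),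
      (U.card.choose j : ℝ) * ((-1 : ℝ) ^ (s - (k + r)) * m (q + k + j - (k + r))))]
    rw [hBcard, hUcard, hD]
    refine Finset.sum_congr rfl fun k hk => ?_
    rw [Finset.mul_sum]
    refine Finset.sum_congr rfl fun j hj => ?_
    have harg : q + k + j - (k + r) = j + (q - r) := by omega
    rw [harg]; ring
  have hRHS : ∑ t ∈ Finset.Icc q d,
      ∑ k ∈ Finset.range (min (t - q) (s - r) + 1),
        (N.choose (t - q - k) : ℝ) * ((s - r).choose k : ℝ) *
          (-1 : ℝ) ^ (s - (k + r)) * m (t - (k + r)) = D := by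
    have step1 : ∀ t ∈ Finset.Icc q d,
        (∑ k ∈ Finset.range (min (t - q) (s - r) + 1),
          (N.choose (t - q - k) : ℝ) * ((s - r).choose k : ℝ) *
            (-1 : ℝ) ^ (s - (k + r)) * m (t - (k + r))) =
        ∑ k ∈ Finset.range (s - r + 1),
          (if q + k ≤ t then
            (N.choose (t - q - k) : ℝ) * ((s - r).choose k : ℝ) *
              (-1 : ℝ) ^ (s - (k + r)) * m (t - (k + r))
          else 0) := by
      intro t ht
      rw [Finset.mem_Icc] at ht
      have e1 : ∀ k ∈ Finset.range (min (t - q) (s - r) + 1),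
          (N.choose (t - q - k) : ℝ) * ((s - r).choose k : ℝ) *
            (-1 : ℝ) ^ (s - (k + r)) * m (t - (k + r)) =
          (if q + k ≤ t then
            (N.choose (t - q - k) : ℝ) * ((s - r).choose k : ℝ) *
              (-1 : ℝ) ^ (s - (k + r)) * m (t - (k + r))
          else 0) := by
        intro k hk
        rw [Finset.mem_range] at hk
        rw [if_pos (by omega)]
      rw [Finset.sum_congr rfl e1]
      refine Finset.sum_subset ?_ ?_
      · intro k hk
        rw [Finset.mem_range] at hk ⊢
        omega
      · intro k hk hk'
        rw [Finset.mem_range] at hk hk'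
        rw [if_neg (by omega)]
    rw [Finset.sum_congr rfl step1, Finset.sum_comm, hD]
    refine Finset.sum_congr rfl fun k hk => ?_
    rw [Finset.mem_range] at hk
    have step2 : (∑ t ∈ Finset.Icc q d,
        if q + k ≤ t then
          (N.choose (t - q - k) : ℝ) * ((s - r).choose k : ℝ) *
            (-1 : ℝ) ^ (s - (k + r)) * m (t - (k + r))
        else 0) =
        ∑ t ∈ Finset.Icc (q + k) d,
          (N.choose (t - q - k) : ℝ) * ((s - r).choose k : ℝ) *
            (-1 : ℝ) ^ (s - (k + r)) * m (t - (k + r)) := by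
      rw [← Finset.sum_filter]
      congr 1
      ext t
      simp only [Finset.mem_filter, Finset.mem_Icc]
      omega
    rw [step2, ← Finset.Ico_add_one_right_eq_Icc, Finset.sum_Ico_eq_sum_range]
    have hkd : q + k ≤ d := by omega
    have hrange : d + 1 - (q + k) = (d - q - k) + 1 := by omega
    rw [hrange]
    have step3 : ∀ j ∈ Finset.range (d - q - k + 1),
        (N.choose (q + k + j - q - k) : ℝ) * ((s - r).choose k : ℝ) *
          (-1 : ℝ) ^ (s - (k + r)) * m (q + k + j - (k + r)) =
        (N.choose j : ℝ) * ((s - r).choose k : ℝ) *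
          (-1 : ℝ) ^ (s - (k + r)) * m (j + (q - r)) := by
      intro j _
      have h1 : q + k + j - q - k = j := by omega
      have h2 : q + k + j - (k + r) = j + (q - r) := by omega
      rw [h1, h2]
    rw [Finset.sum_congr rfl step3]
    refine (Finset.sum_subset ?_ ?_).symm
    · intro j hj
      rw [Finset.mem_range] at hj ⊢
      omega
    · intro j hj hj'
      rw [Finset.mem_range] at hj hj'
      rw [Nat.choose_eq_zero_of_lt (by omega)]
      simp
  rw [hLHS, hRHS]
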